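/- arXiv:1809.06761 — 2 statements merged into one kernel-verified Lean document; each statement's English description precedes it below -/
import Mathlib

section
/- If ⊢ is a logic, then ⊢ and its containment companion ⊢^r have the same antitheorems: a set Σ of formulas is an antitheorem of ⊢^r if and only if it is an antitheorem of ⊢. -/
open FirstOrder FirstOrder.Language

variable {L : FirstOrder.Language.{0, 0}}

/-- The set of variables occurring in a formula (term). -/
def Tvar (φ : L.Term ℕ) : Set ℕ := {x | x ∈ φ.varFinset}

/-- The set of variables occurring in a set of formulas. -/
def SVar (Γ : Set (L.Term ℕ)) : Set ℕ := ⋃ γ ∈ Γ, Tvar γ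

/-- The image of a set of formulas under a substitution. -/
def SubstImg (σ : ℕ → L.Term ℕ) (Γ : Set (L.Term ℕ)) : Set (L.Term ℕ) :=
  (fun ψ => ψ.subst σ) '' Γ

/-- A logic: a substitution-invariant consequence relation on formulas. -/
structure ConsLogic (L : FirstOrder.Language.{0, 0}) where
  deriv : Set (L.Term ℕ) → L.Term ℕ → Prop
  refl : ∀ Γ φ, φ ∈ Γ → deriv Γ φ
  mono : ∀ Γ Δ φ, Γ ⊆ Δ → deriv Γ φ → deriv Δ φ
  cut : ∀ Γ Δ φ, (∀ δ ∈ Δ, deriv Γ δ) → deriv (Γ ∪ Δ) φ → deriv Γ φ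
  substInv : ∀ Γ φ (σ : ℕ → L.Term ℕ), deriv Γ φ → deriv (SubstImg σ Γ) (φ.subst σ)

/-- A consequence relation is finitary. -/
def FinitaryRel (R : Set (L.Term ℕ) → L.Term ℕ → Prop) : Prop :=
  ∀ Γ φ, R Γ φ → ∃ Δ : Finset (L.Term ℕ), ↑Δ ⊆ Γ ∧ R ↑Δ φ

/-- Σ is an antitheorem of the consequence relation `R`. -/
def IsAntitheorem (R : Set (L.Term ℕ) → L.Term ℕ → Prop) (S : Set (L.Term ℕ)) : Prop :=
  ∀ (σ : ℕ → L.Term ℕ) (φ : L.Term ℕ), R (SubstImg σ S) φ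

/-- The containment companion of a logic. -/
def CC (V : ConsLogic L) (Γ : Set (L.Term ℕ)) (φ : L.Term ℕ) : Prop :=
  (V.deriv Γ φ ∧ Tvar φ ⊆ SVar Γ) ∨ ∃ S, IsAntitheorem V.deriv S ∧ S ⊆ Γ

/-- The matrix ⟨A, F⟩ is a model of the consequence relation `R`. -/
def IsMatrixModel (R : Set (L.Term ℕ) → L.Term ℕ → Prop) (A : Type) [L.Structure A]
    (F : Set A) : Prop :=
  ∀ Γ φ, R Γ φ → ∀ h : ℕ → A, (∀ γ ∈ Γ, Term.realize h γ ∈ F) → Term.realize h φ ∈ F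

/-- An isomorphism of matrices: an isomorphism of the underlying algebras mapping the
filter exactly onto the filter. -/
def MatrixIso (A : Type) [L.Structure A] (F : Set A) (B : Type) [L.Structure B]
    (G : Set B) : Prop :=
  ∃ e : L.Equiv A B, ∀ a, a ∈ F ↔ e a ∈ G

/-- The one-element structure. -/
def punitStruct : L.Structure PUnit where
  funMap _ _ := PUnit.unit
  RelMap _ _ := False

/-- An r-direct system of matrices over the join-semilattice `I`. -/
structure RDirectSystem (L : FirstOrder.Language.{0, 0}) (I : Type) [SemilatticeSup I] where
  A : I → Type
  str : ∀ i, L.Structure (A i)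
  F : ∀ i, Set (A i)
  f : ∀ i j, i ≤ j → A i → A j
  f_hom : ∀ i j (h : i ≤ j) (n : ℕ) (g : L.Functions n) (as : Fin n → A i),
    f i j h (@Structure.funMap L (A i) (str i) n g as) =
      @Structure.funMap L (A j) (str j) n g (fun k => f i j h (as k))
  f_id : ∀ i (a : A i), f i i le_rfl a = a
  f_comp : ∀ i j k (hij : i ≤ j) (hjk : j ≤ k) (a : A i),
    f j k hjk (f i j hij a) = f i k (hij.trans hjk) a
  plus_sup : ∀ i j, (F i).Nonempty → (F j).Nonempty → (F (i ⊔ j)).Nonempty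
  f_filter : ∀ i j (h : i ≤ j), (F j).Nonempty → f i j h ⁻¹' F j = F i

/-- The Płonka sum structure over an r-direct system (the language has no constants). -/
def RDirectSystem.plonkaStr {I : Type} [SemilatticeSup I] (S : RDirectSystem L I)
    [IsEmpty (L.Functions 0)] : L.Structure (Σ i, S.A i) where
  funMap {n} g as :=
    match n, g, as with
    | 0, g, _ => isEmptyElim g
    | (m + 1), g, as =>
      ⟨Finset.univ.sup' Finset.univ_nonempty fun k => (as k).1,
        @Structure.funMap L _ (S.str _) _ g fun k =>
          S.f (as k).1 _ (Finset.le_sup' (fun k => (as k).1) (Finset.mem_univ k)) (as k).2⟩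
  RelMap _ _ := False

/-- The filter of the Płonka sum of an r-direct system of matrices. -/
def RDirectSystem.filter {I : Type} [SemilatticeSup I] (S : RDirectSystem L I) :
    Set (Σ i, S.A i) := {a | a.2 ∈ S.F a.1}


/-- The application `t ∗ u` of the binary term `s` to formulas `t` and `u`. -/
def starT (s : L.Term (Fin 2)) (t u : L.Term ℕ) : L.Term ℕ := s.subst ![t, u]

/-- The result `χ(t, z̄)` of substituting the formula `t` for the variable `v` in `χ`. -/
def substVar (χ : L.Term ℕ) (v : ℕ) (t : L.Term ℕ) : L.Term ℕ :=
  χ.subst (fun m => if m = v then t else Term.var m)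

/-- `(ε, δ)` is an instance of one of the partition-function identities P1–P5,
read as term identities for `∗`. -/
def IsPIdentInstance (s : L.Term (Fin 2)) (ε δ : L.Term ℕ) : Prop :=
  (∃ a, ε = starT s a a ∧ δ = a) ∨
  (∃ a b c, ε = starT s a (starT s b c) ∧ δ = starT s (starT s a b) c) ∨
  (∃ a b c, ε = starT s a (starT s b c) ∧ δ = starT s a (starT s c b)) ∨
  (∃ (n : ℕ) (g : L.Functions (n + 1)) (as : Fin (n + 1) → L.Term ℕ) (b : L.Term ℕ),
    ε = starT s (Term.func g as) b ∧ δ = Term.func g (fun k => starT s (as k) b)) ∨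
  (∃ (n : ℕ) (g : L.Functions (n + 1)) (as : Fin (n + 1) → L.Term ℕ) (b : L.Term ℕ),
    ε = starT s b (Term.func g as) ∧ δ = (List.ofFn as).foldl (starT s) b)

/-- The consequence relation `R` has `s` as an r-partition function. -/
def HasRPartitionFunction (R : Set (L.Term ℕ) → L.Term ℕ → Prop) (s : L.Term (Fin 2)) :
    Prop :=
  (∀ i : Fin 2, i ∈ s.varFinset) ∧
  R {Term.var 0, Term.var 1} (starT s (Term.var 0) (Term.var 1)) ∧
  R {starT s (Term.var 0) (Term.var 1)} (Term.var 0) ∧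
  ∀ ε δ, IsPIdentInstance s ε δ → ∀ (χ : L.Term ℕ) (v : ℕ),
    R {substVar χ v ε} (substVar χ v δ) ∧ R {substVar χ v δ} (substVar χ v ε)

/-- The interpretation of the binary term `s` in the structure `A`. -/
def dotOf (A : Type) [L.Structure A] (s : L.Term (Fin 2)) : A → A → A :=
  fun a b => Term.realize ![a, b] s

/-- A binary operation on an `L`-structure is a partition function. -/
def IsPartitionFunction (A : Type) [L.Structure A] (d : A → A → A) : Prop :=
  (∀ a, d a a = a) ∧
  (∀ a b c, d a (d b c) = d (d a b) c) ∧
  (∀ a b c, d a (d b c) = d a (d c b)) ∧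
  (∀ (n : ℕ) (g : L.Functions (n + 1)) (as : Fin (n + 1) → A) (b : A),
    d (Structure.funMap g as) b = Structure.funMap g (fun k => d (as k) b)) ∧
  (∀ (n : ℕ) (g : L.Functions (n + 1)) (as : Fin (n + 1) → A) (b : A),
    d b (Structure.funMap g as) = (List.ofFn as).foldl d b)

/-- The equivalence relation `a ≈ b` induced by a partition function. -/
def PApprox {A : Type} (d : A → A → A) (a b : A) : Prop := d a b = a ∧ d b a = b

lemma subst_var_eq (t : L.Term ℕ) : t.subst Term.var = t := by
  induction t with
  | var => rfl
  | func g as ih => simp [Term.subst, ih]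

lemma subst_comp (t : L.Term ℕ) (σ τ : ℕ → L.Term ℕ) :
    (t.subst σ).subst τ = t.subst (fun x => (σ x).subst τ) := by
  induction t with
  | var => rfl
  | func g as ih => simp [Term.subst, ih]

/-- A logic `⊢` and its containment companion `⊢^r` have the same
antitheorems. -/
theorem statement_9 (L : FirstOrder.Language.{0, 0}) [IsEmpty (L.Functions 0)]
    (V : ConsLogic L) (Sg : Set (L.Term ℕ)) :
    IsAntitheorem (CC V) Sg ↔ IsAntitheorem V.deriv Sg := by
  constructor
  · intro h σ φ
    rcases h σ φ with ⟨hd, _⟩ | ⟨S, hS, hsub⟩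
    · exact hd
    · have := hS Term.var φ
      have heq : SubstImg Term.var S = S := by
        ext x; simp [SubstImg, subst_var_eq]
      rw [heq] at this
      exact V.mono _ _ _ hsub this
  · intro h σ φ
    right
    refine ⟨SubstImg σ Sg, ?_, le_rfl⟩
    intro τ ψ
    have heq : SubstImg τ (SubstImg σ Sg) = SubstImg (fun x => (σ x).subst τ) Sg := by
      ext x
      simp only [SubstImg, Set.mem_image]
      constructor
      · rintro ⟨y, ⟨z, hz, rfl⟩, rfl⟩
        exact ⟨z, hz, (subst_comp z σ τ).symm⟩
      · rintro ⟨z, hz, rfl⟩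
        exact ⟨z.subst σ, ⟨z, hz, rfl⟩, subst_comp z σ τ⟩
    rw [heq]
    exact h _ ψ
end

section
/- Let ⊢ be a logic with r-partition function ∗. Suppose Γ ⊢ φ, γ ∈ Γ, and the set X = Var(φ) ∖ Var(Γ) of variables occurring in φ but not in Γ is nonempty. Then {γ∗x : x ∈ X} ∪ (Γ ∖ {γ}) ⊢^r φ, where ⊢^r is the containment companion of ⊢. -/
open FirstOrder FirstOrder.Language

variable {L : FirstOrder.Language.{0, 0}}

lemma subst_subst' {α β γ : Type*} (t : L.Term α) (f : α → L.Term β) (g : β → L.Term γ) :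
    (t.subst f).subst g = t.subst (fun i => (f i).subst g) := by
  induction t with
  | var => simp [Term.subst]
  | func _ _ ih => simp [Term.subst, ih]

lemma mem_varFinset_subst {α β : Type*} [DecidableEq α] [DecidableEq β]
    (t : L.Term α) (f : α → L.Term β) (v : β) :
    v ∈ (t.subst f).varFinset ↔ ∃ i ∈ t.varFinset, v ∈ (f i).varFinset := by
  induction t with
  | var => simp [Term.subst, Term.varFinset]
  | func _ ts ih => simp [Term.subst, Term.varFinset, ih]; tauto

/-- Let `⊢` be a logic with r-partition function `∗`.  If `Γ ⊢ φ`,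
`γ ∈ Γ`, and the set `X = Var(φ) ∖ Var(Γ)` is nonempty, then
`{γ∗x : x ∈ X} ∪ (Γ ∖ {γ}) ⊢^r φ`. -/
theorem statement_12 (L : FirstOrder.Language.{0, 0}) [IsEmpty (L.Functions 0)]
    (V : ConsLogic L) (s : L.Term (Fin 2))
    (hpf : HasRPartitionFunction V.deriv s)
    (Γ : Set (L.Term ℕ)) (φ γ : L.Term ℕ) (hder : V.deriv Γ φ) (hγ : γ ∈ Γ)
    (hne : (Tvar φ \ SVar Γ).Nonempty) :
    CC V ((fun x => starT s γ (Term.var x)) '' (Tvar φ \ SVar Γ) ∪ (Γ \ {γ})) φ := by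
  classical
  obtain ⟨x₀, hx₀⟩ := hne
  set X : Set ℕ := Tvar φ \ SVar Γ with hX
  set Δ : Set (L.Term ℕ) := (fun x => starT s γ (Term.var x)) '' X ∪ (Γ \ {γ}) with hΔ
  -- the key star formula is in Δ
  have hstar0 : starT s γ (Term.var x₀) ∈ Δ := Or.inl ⟨x₀, hx₀, rfl⟩
  -- Step 1 : Δ ⊢ γ
  have hstep1 : V.deriv Δ γ := by
    have h2 := hpf.2.2.1
    set σ : ℕ → L.Term ℕ := fun n => if n = 0 then γ else Term.var x₀ with hσ
    have := V.substInv _ _ σ h2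
    have himg : SubstImg σ {starT s (Term.var 0) (Term.var 1)} = {starT s γ (Term.var x₀)} := by
      simp only [SubstImg, Set.image_singleton]
      congr 1
      simp only [starT, subst_subst']
      congr 1
      funext i
      fin_cases i <;> simp [Term.subst, hσ]
    rw [himg] at this
    have hγeq : (Term.var 0 : L.Term ℕ).subst σ = γ := by simp [Term.subst, hσ]
    rw [hγeq] at this
    exact V.mono _ _ _ (Set.singleton_subset_iff.2 hstar0) this
  -- Step 2 : Δ ∪ {γ} ⊢ φ
  have hstep2 : V.deriv (Δ ∪ {γ}) φ := by
    refine V.mono _ _ _ (fun δ hδ => ?_) hder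
    by_cases hδγ : δ = γ
    · exact Or.inr (hδγ ▸ rfl)
    · exact Or.inl (Or.inr ⟨hδ, hδγ⟩)
  have hderΔ : V.deriv Δ φ :=
    V.cut _ _ _ (fun δ hδ => by rw [Set.mem_singleton_iff.1 hδ]; exact hstep1) hstep2
  -- variable containment
  left
  refine ⟨hderΔ, fun z hz => ?_⟩
  have hmemstar : ∀ (x : ℕ), z ∈ Tvar γ ∨ z = x → z ∈ Tvar (starT s γ (Term.var x)) := by
    intro x hx
    show z ∈ (s.subst ![γ, Term.var x]).varFinset
    rw [mem_varFinset_subst]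
    rcases hx with hx | hx
    · exact ⟨0, hpf.1 0, hx⟩
    · refine ⟨1, hpf.1 1, ?_⟩
      simp [Term.varFinset, hx]
  by_cases hzΓ : z ∈ SVar Γ
  · obtain ⟨T, ⟨δ, rfl⟩, hT⟩ := hzΓ
    simp only [Set.mem_iUnion, exists_prop] at hT
    obtain ⟨hδΓ, hzδ⟩ := hT
    by_cases hδγ : δ = γ
    · subst hδγ
      exact Set.mem_biUnion hstar0 (hmemstar x₀ (Or.inl hzδ))
    · exact Set.mem_biUnion (Or.inr ⟨hδΓ, hδγ⟩) hzδ
  · have hzX : z ∈ X := ⟨hz, hzΓ⟩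
    exact Set.mem_biUnion (Or.inl ⟨z, hzX, rfl⟩) (hmemstar z (Or.inr rfl))
end
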